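/- arXiv:2204.01088 — 3 statements merged into one kernel-verified Lean document; each statement's English description precedes it below -/
import Mathlib

section
/- Let H be a real Hilbert space, (P_t)_{t>0} a strongly continuous semigroup associated with a closed symmetric non-negative definite bilinear form E with dense domain D(E). Suppose there is a closed subspace H_0 ⊂ H and an integrable function ψ : (0,∞) → (0,1] with ψ(t) → 0 as t → ∞ such that ‖P_t u‖ ≤ ψ(t)‖u‖ for all u ∈ H_0 and t > 0. Then for all u ∈ H_0, the Bochner integral G(u) = ∫_0^∞ P_t(u) dt belongs to D(E), E(G(u), v) = ⟨u, v⟩ for all v ∈ D(E), and E(G(u), G(u)) ≤ (∫_0^∞ ψ(t) dt) ‖u‖². -/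
open MeasureTheory Real Set Filter

theorem cs_aux' {H : Type*} [AddCommGroup H] [Module ℝ H] (E : H →ₗ[ℝ] H →ₗ[ℝ] ℝ)
    (hsymm : ∀ u v, E u v = E v u) (hnonneg : ∀ u, 0 ≤ E u u) (x y : H) :
    |E x y| ≤ Real.sqrt (E x x * E y y) := by
  have h : ∀ t : ℝ, 0 ≤ E y y * (t * t) + (2 * E x y) * t + E x x := by
    intro t
    have h0 := hnonneg (x + t • y)
    simp only [map_add, LinearMap.map_smul, LinearMap.add_apply, LinearMap.smul_apply,
      smul_eq_mul] at h0
    rw [hsymm y x] at h0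
    ring_nf at h0 ⊢
    linarith
  have hd := discrim_le_zero h
  rw [discrim] at hd
  apply Real.abs_le_sqrt
  nlinarith

theorem shift_Ioi_aux {F : Type*} [NormedAddCommGroup F] [NormedSpace ℝ F]
    (g : ℝ → F) (a : ℝ) :
    ∫ t in Ioi (0:ℝ), g (t + a) = ∫ t in Ioi a, g t := by
  have h := (measurePreserving_add_right volume a).setIntegral_preimage_emb
    (measurableEmbedding_addRight a) g (Ioi a)
  simpa [preimage_add_const_Ioi] using h

/-- Covariance representation via closed symmetric forms: assume `E` is a closed symmetric
non-negative definite bilinear form with dense domain `D`, `(P_t)_{t>0}` is the associated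
strongly continuous contraction semigroup, `H₀` is a closed subspace and `ψ : (0,∞) → (0,1]`
is integrable with `ψ(t) → 0` and `‖P_t u‖ ≤ ψ(t)‖u‖` on `H₀`. Then for `u ∈ H₀` the Bochner
integral `G(u) = ∫_0^∞ P_t u dt` exists, lies in `D`, satisfies `E(G(u), v) = ⟨u, v⟩` for all
`v ∈ D`, and `E(G(u), G(u)) ≤ (∫_0^∞ ψ) ‖u‖²`. -/
theorem covariance_representation_closed_form
    {H : Type*} [NormedAddCommGroup H] [InnerProductSpace ℝ H] [CompleteSpace H]
    (D : Submodule ℝ H) (hDdense : Dense (D : Set H))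
    (E : H →ₗ[ℝ] H →ₗ[ℝ] ℝ)
    (hsymm : ∀ u v : H, E u v = E v u)
    (hnonneg : ∀ u : H, 0 ≤ E u u)
    (hclosed : ∀ (u : ℕ → H) (w : H), (∀ n, u n ∈ D) →
      Tendsto u atTop (nhds w) →
      (∀ ε > (0 : ℝ), ∃ N, ∀ m ≥ N, ∀ n ≥ N, E (u n - u m) (u n - u m) < ε) →
      w ∈ D ∧ Tendsto (fun n => E (u n - w) (u n - w)) atTop (nhds 0))
    (P : ℝ → H →L[ℝ] H)
    (hsg : ∀ s > (0 : ℝ), ∀ t > (0 : ℝ), P (s + t) = (P s).comp (P t))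
    (hcontr : ∀ t > (0 : ℝ), ‖P t‖ ≤ 1)
    (hstrong : ∀ u : H, Tendsto (fun t => P t u) (nhdsWithin 0 (Ioi 0)) (nhds u))
    (hcont : ∀ u : H, ContinuousOn (fun t => P t u) (Ioi 0))
    (hdom : ∀ (u : H), ∀ t > (0 : ℝ), P t u ∈ D)
    (hgen : ∀ (u : H), ∀ v ∈ D, ∀ t > (0 : ℝ),
      HasDerivAt (fun s : ℝ => (inner ℝ (P s u) v : ℝ)) (-(E (P t u) v)) t)
    (H₀ : Submodule ℝ H) (hH₀ : IsClosed (H₀ : Set H))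
    (ψ : ℝ → ℝ) (hψ : ∀ t > (0 : ℝ), ψ t ∈ Ioc (0 : ℝ) 1)
    (hψ0 : Tendsto ψ atTop (nhds 0))
    (hψint : IntegrableOn ψ (Ioi 0) volume)
    (hP : ∀ u ∈ H₀, ∀ t > (0 : ℝ), ‖P t u‖ ≤ ψ t * ‖u‖) :
    ∀ u ∈ H₀,
      IntegrableOn (fun t => P t u) (Ioi 0) volume ∧
      (∫ t in Ioi (0 : ℝ), P t u) ∈ D ∧
      (∀ v ∈ D, E (∫ t in Ioi (0 : ℝ), P t u) v = (inner ℝ u v : ℝ)) ∧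
      E (∫ t in Ioi (0 : ℝ), P t u) (∫ t in Ioi (0 : ℝ), P t u) ≤
        (∫ t in Ioi (0 : ℝ), ψ t) * ‖u‖ ^ 2 := by
  intro u hu
  have hmeas : AEStronglyMeasurable (fun t => P t u) (volume.restrict (Ioi (0:ℝ))) :=
    (hcont u).aestronglyMeasurable measurableSet_Ioi
  have hint : IntegrableOn (fun t => P t u) (Ioi 0) volume := by
    refine Integrable.mono' (hψint.mul_const ‖u‖) hmeas ?_
    exact (ae_restrict_iff' measurableSet_Ioi).2 (ae_of_all _ fun t ht => hP u hu t ht)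
  set G := ∫ t in Ioi (0:ℝ), P t u with hGdef
  -- shift identity
  have hshift : ∀ a : ℝ, 0 < a → P a G = ∫ t in Ioi a, P t u := by
    intro a ha
    have h1 : P a G = ∫ t in Ioi (0:ℝ), P a (P t u) :=
      ((P a).integral_comp_comm hint).symm
    have h2 : ∀ t ∈ Ioi (0:ℝ), P a (P t u) = P (t + a) u := by
      intro t ht
      rw [add_comm, hsg a ha t ht]; rfl
    rw [h1, setIntegral_congr_fun measurableSet_Ioi h2]
    exact shift_Ioi_aux (fun t => P t u) a
  -- scalar representation
  have hrep : ∀ v : H, ∀ s : ℝ, 0 < s →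
      (inner ℝ (P s G) v : ℝ) = ∫ t in Ioi s, (inner ℝ (P t u) v : ℝ) := by
    intro v s hs
    rw [hshift s hs]
    have hints : IntegrableOn (fun t => P t u) (Ioi s) volume :=
      hint.mono_set (Ioi_subset_Ioi hs.le)
    rw [real_inner_comm, ← integral_inner hints v]
    exact integral_congr_ae (ae_of_all _ fun t => real_inner_comm _ _)
  -- key identity: E (P a G) v = ⟨P a u, v⟩ for v ∈ D, a > 0
  have key : ∀ a : ℝ, 0 < a → ∀ v ∈ D, E (P a G) v = (inner ℝ (P a u) v : ℝ) := by
    intro a ha v hv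
    set f := fun t => (inner ℝ (P t u) v : ℝ) with hfdef
    have hfint : IntegrableOn f (Ioi (0:ℝ)) volume := hint.inner_const v
    have hfc : ContinuousAt f a :=
      ((hcont u).continuousAt (Ioi_mem_nhds ha)).inner continuousAt_const
    set c := a + 1 with hcdef
    have hac : a < c := lt_add_one a
    have hIcc : IntegrableOn f (uIcc a c) volume := by
      refine hfint.mono_set ?_
      rw [uIcc_of_le hac.le]
      exact fun x hx => lt_of_lt_of_le ha hx.1
    have hd1 : HasDerivAt (fun s => ∫ t in s..c, f t) (-(f a)) a :=
      intervalIntegral.integral_hasDerivAt_left hIcc.intervalIntegrable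
        ⟨Ioi 0, Ioi_mem_nhds ha, hfint.aestronglyMeasurable⟩ hfc
    have hsplit : (fun s => (inner ℝ (P s G) v : ℝ)) =ᶠ[nhds a]
        fun s => (∫ t in s..c, f t) + ∫ t in Ioi c, f t := by
      filter_upwards [Ioo_mem_nhds ha hac] with s hs
      have h1 : IntegrableOn f (Ioc s c) volume :=
        hfint.mono_set (fun x hx => hs.1.trans hx.1)
      have h2 : IntegrableOn f (Ioi c) volume :=
        hfint.mono_set (Ioi_subset_Ioi (ha.trans hac).le)
      rw [hrep v s hs.1, intervalIntegral.integral_of_le hs.2.le,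
        ← Ioc_union_Ioi_eq_Ioi hs.2.le,
        setIntegral_union (Ioc_disjoint_Ioi le_rfl) measurableSet_Ioi h1 h2]
    have hd2 : HasDerivAt (fun s => (inner ℝ (P s G) v : ℝ)) (-(f a)) a :=
      ((hd1.add_const (∫ t in Ioi c, f t)).congr_of_eventuallyEq hsplit)
    have huniq := (hgen G v hv a ha).unique hd2
    exact neg_inj.mp huniq
  -- approximating sequence
  have hapos : ∀ n : ℕ, (0:ℝ) < 1 / (n + 1) := fun n => by positivity
  set a : ℕ → ℝ := fun n => 1 / (n + 1) with hadef
  have hat : Tendsto a atTop (nhdsWithin 0 (Ioi 0)) :=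
    tendsto_nhdsWithin_of_tendsto_nhds_of_eventually_within _
      tendsto_one_div_add_atTop_nhds_zero_nat (Eventually.of_forall fun n => hapos n)
  have hGseq : Tendsto (fun n => P (a n) G) atTop (nhds G) := (hstrong G).comp hat
  have huseq : Tendsto (fun n => P (a n) u) atTop (nhds u) := (hstrong u).comp hat
  have hmemD : ∀ n, P (a n) G ∈ D := fun n => hdom G _ (hapos n)
  have hkey' : ∀ n, ∀ v ∈ D, E (P (a n) G) v = (inner ℝ (P (a n) u) v : ℝ) :=
    fun n => key _ (hapos n)
  -- E-Cauchy
  have hcauchy : ∀ ε > (0:ℝ), ∃ N, ∀ m ≥ N, ∀ n ≥ N,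
      E (P (a n) G - P (a m) G) (P (a n) G - P (a m) G) < ε := by
    intro ε hε
    have hδ : (0:ℝ) < Real.sqrt ε := Real.sqrt_pos.2 hε
    obtain ⟨N1, hN1⟩ := Metric.cauchySeq_iff.1 hGseq.cauchySeq _ hδ
    obtain ⟨N2, hN2⟩ := Metric.cauchySeq_iff.1 huseq.cauchySeq _ hδ
    refine ⟨max N1 N2, fun m hm n hn => ?_⟩
    have hdm : P (a n) G - P (a m) G ∈ D := D.sub_mem (hmemD n) (hmemD m)
    have e1 : E (P (a n) G - P (a m) G) (P (a n) G - P (a m) G)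
        = (inner ℝ (P (a n) u - P (a m) u) (P (a n) G - P (a m) G) : ℝ) := by
      rw [E.map_sub, LinearMap.sub_apply, hkey' n _ hdm, hkey' m _ hdm, ← inner_sub_left]
    rw [e1]
    have hb1 : ‖P (a n) u - P (a m) u‖ < Real.sqrt ε := by
      rw [← dist_eq_norm]
      exact hN2 n (le_trans (le_max_right N1 N2) hn) m (le_trans (le_max_right N1 N2) hm)
    have hb2 : ‖P (a n) G - P (a m) G‖ < Real.sqrt ε := by
      rw [← dist_eq_norm]
      exact hN1 n (le_trans (le_max_left N1 N2) hn) m (le_trans (le_max_left N1 N2) hm)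
    calc (inner ℝ (P (a n) u - P (a m) u) (P (a n) G - P (a m) G) : ℝ)
        ≤ ‖P (a n) u - P (a m) u‖ * ‖P (a n) G - P (a m) G‖ := real_inner_le_norm _ _
      _ < Real.sqrt ε * Real.sqrt ε :=
          mul_lt_mul'' hb1 hb2 (norm_nonneg _) (norm_nonneg _)
      _ = ε := Real.mul_self_sqrt hε.le
  obtain ⟨hGD, hE0⟩ := hclosed (fun n => P (a n) G) G hmemD hGseq hcauchy
  -- E G v = ⟨u, v⟩
  have hEGv : ∀ v ∈ D, E G v = (inner ℝ u v : ℝ) := by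
    intro v hv
    have hb : ∀ n, ‖E (G - P (a n) G) v‖ ≤
        Real.sqrt (E (P (a n) G - G) (P (a n) G - G) * E v v) := by
      intro n
      have he : G - P (a n) G = -(P (a n) G - G) := by abel
      rw [Real.norm_eq_abs, he, E.map_neg, LinearMap.neg_apply, abs_neg]
      exact cs_aux' E hsymm hnonneg _ _
    have hsq : Tendsto (fun n => Real.sqrt (E (P (a n) G - G) (P (a n) G - G) * E v v))
        atTop (nhds 0) := by
      have := (hE0.mul_const (E v v)).sqrt
      simpa using this
    have h1 : Tendsto (fun n => E (G - P (a n) G) v) atTop (nhds 0) :=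
      squeeze_zero_norm hb hsq
    have h2 : Tendsto (fun n => (inner ℝ (P (a n) u) v : ℝ)) atTop (nhds (inner ℝ u v)) :=
      huseq.inner tendsto_const_nhds
    have h3 := h1.add h2
    rw [zero_add] at h3
    have h4 : (fun n => E (G - P (a n) G) v + (inner ℝ (P (a n) u) v : ℝ))
        = fun _ => E G v := by
      funext n
      rw [E.map_sub, LinearMap.sub_apply, hkey' n v hv]
      ring
    rw [h4] at h3
    exact tendsto_nhds_unique tendsto_const_nhds h3
  -- final bound
  have hnormG : ‖G‖ ≤ (∫ t in Ioi (0:ℝ), ψ t) * ‖u‖ := by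
    calc ‖G‖ ≤ ∫ t in Ioi (0:ℝ), ‖P t u‖ := norm_integral_le_integral_norm _
      _ ≤ ∫ t in Ioi (0:ℝ), ψ t * ‖u‖ :=
          setIntegral_mono_on hint.norm (hψint.mul_const _) measurableSet_Ioi
            (fun t ht => hP u hu t ht)
      _ = (∫ t in Ioi (0:ℝ), ψ t) * ‖u‖ := integral_mul_const _ _
  refine ⟨hint, hGD, hEGv, ?_⟩
  rw [hEGv G hGD]
  calc (inner ℝ u G : ℝ) ≤ ‖u‖ * ‖G‖ := real_inner_le_norm u G
    _ ≤ ‖u‖ * ((∫ t in Ioi (0:ℝ), ψ t) * ‖u‖) :=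
        mul_le_mul_of_nonneg_left hnormG (norm_nonneg u)
    _ = (∫ t in Ioi (0:ℝ), ψ t) * ‖u‖ ^ 2 := by ring
end

section
/- Let δ ∈ (0,1) and μ_δ(dx) = C_δ exp(-|x|^δ) dx be the corresponding probability measure on ℝ with density p_δ. For p ∈ [2,∞) and g ∈ L^p(μ_δ) with ∫ g dμ_δ = 0, define f_δ(x) = (1/p_δ(x)) ∫_x^∞ g(y) p_δ(y) dy. Then for every r ∈ [1,∞) with r/(r-1) > p/(p-1), one has ‖f_δ‖_{L^r(μ_δ)} ≤ C(p,δ,r) ‖g‖_{L^p(μ_δ)} for some constant C(p,δ,r) depending only on p, δ, r. -/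
open MeasureTheory Real Set
open scoped ENNReal

/-- The density `p_δ(x) = C exp(-|x|^δ)`. -/
noncomputable def pdel (C δ x : ℝ) : ℝ := C * Real.exp (-(|x| ^ δ))

/-- The probability measure `μ_δ(dx) = C exp(-|x|^δ) dx` on `ℝ`. -/
noncomputable def mudel (C δ : ℝ) : Measure ℝ :=
  volume.withDensity fun x => ENNReal.ofReal (pdel C δ x)

/-- `f_δ(x) = p_δ(x)⁻¹ ∫_x^∞ g(y) p_δ(y) dy`. -/
noncomputable def fdel (C δ : ℝ) (g : ℝ → ℝ) (x : ℝ) : ℝ :=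
  (pdel C δ x)⁻¹ * ∫ y in Ioi x, g y * pdel C δ y

lemma pdel_pos {C : ℝ} (δ : ℝ) (hC : 0 < C) (x : ℝ) : 0 < pdel C δ x :=
  mul_pos hC (Real.exp_pos _)

lemma meas_absrpow {δ : ℝ} (hδ : 0 ≤ δ) : Measurable fun x : ℝ => |x| ^ δ :=
  ((Real.continuous_rpow_const hδ).comp continuous_abs).measurable

lemma meas_expabs {δ : ℝ} (hδ : 0 ≤ δ) (b : ℝ) :
    Measurable fun x : ℝ => ENNReal.ofReal (Real.exp (-(b * |x| ^ δ))) :=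
  (((((meas_absrpow hδ).const_mul b).neg).exp)).ennreal_ofReal

lemma meas_pdel (C : ℝ) {δ : ℝ} (hδ : 0 ≤ δ) :
    Measurable fun x : ℝ => ENNReal.ofReal (pdel C δ x) := by
  have : Measurable fun x : ℝ => C * Real.exp (-(|x| ^ δ)) :=
    ((meas_absrpow hδ).neg.exp).const_mul C
  exact this.ennreal_ofReal

lemma lint_exp_base {δ C : ℝ} (hδ : 0 ≤ δ) (hC : 0 < C) (hprob : IsProbabilityMeasure (mudel C δ)) :
    ∫⁻ x : ℝ, ENNReal.ofReal (Real.exp (-(|x| ^ δ))) < ∞ := by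
  have h1 : mudel C δ Set.univ = 1 := measure_univ
  rw [mudel, withDensity_apply _ MeasurableSet.univ, Measure.restrict_univ] at h1
  simp only [pdel, ENNReal.ofReal_mul hC.le] at h1
  rw [lintegral_const_mul (f := fun a => ENNReal.ofReal (Real.exp (-(|a| ^ δ)))) _ ((meas_absrpow hδ).neg.exp).ennreal_ofReal] at h1
  refine lt_top_iff_ne_top.mpr fun htop => ?_
  rw [htop, ENNReal.mul_top (by simp [hC])] at h1
  exact ENNReal.top_ne_one h1

lemma lint_exp_scaled {δ C : ℝ} (hδ : 0 < δ) (hC : 0 < C)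
    (hprob : IsProbabilityMeasure (mudel C δ)) {b : ℝ} (hb : 0 < b) :
    ∫⁻ x : ℝ, ENNReal.ofReal (Real.exp (-(b * |x| ^ δ))) < ∞ := by
  set c : ℝ := b ^ (1/δ) with hcdef
  have hc : 0 < c := Real.rpow_pos_of_pos hb _
  have key : ∀ x : ℝ, b * |x| ^ δ = |c * x| ^ δ := by
    intro x
    rw [abs_mul, abs_of_pos hc, Real.mul_rpow hc.le (abs_nonneg x), hcdef,
      ← Real.rpow_mul hb.le, one_div_mul_cancel hδ.ne', Real.rpow_one]
  set f : ℝ → ℝ≥0∞ := fun u => ENNReal.ofReal (Real.exp (-(|u| ^ δ))) with hfdef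
  have hfm : Measurable f := ((meas_absrpow hδ.le).neg.exp).ennreal_ofReal
  have h2 : ∫⁻ x : ℝ, ENNReal.ofReal (Real.exp (-(b * |x| ^ δ))) = ∫⁻ x : ℝ, f (c * x) := by
    refine lintegral_congr fun x => ?_
    rw [hfdef]; simp only [key x]
  rw [h2]
  have h3 : ∫⁻ x : ℝ, f (c * x) = ∫⁻ u, f u ∂(Measure.map (fun x : ℝ => c * x) volume) :=
    (lintegral_map hfm (measurable_const_mul c)).symm
  rw [h3, Real.map_volume_mul_left hc.ne', lintegral_smul_measure]
  exact ENNReal.mul_lt_top ENNReal.ofReal_lt_top (lint_exp_base hδ.le hC hprob)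

lemma exp_conv {δ ε a b : ℝ} (hδ : 0 < δ) (hε0 : 0 ≤ ε) (hε1 : ε ≤ 1) (ha : 0 ≤ a)
    (hab : a ≤ b) :
    Real.exp (-(b ^ δ)) ≤ Real.exp (-((1 - ε) * a ^ δ)) * Real.exp (-(ε * b ^ δ)) := by
  rw [← Real.exp_add]
  apply Real.exp_le_exp.mpr
  have h := Real.rpow_le_rpow ha hab hδ.le
  nlinarith

lemma real_density_calc {C : ℝ} (hC : 0 < C) (a r γ : ℝ) :
    (C * Real.exp (-a)) * (((C * Real.exp (-a))⁻¹) ^ r * Real.exp (-(γ * a)) ^ r)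
      = C ^ (1 - r) * Real.exp (-((γ * r - (r - 1)) * a)) := by
  rw [mul_inv, ← Real.exp_neg, neg_neg,
    Real.mul_rpow (inv_nonneg.mpr hC.le) (Real.exp_pos a).le,
    Real.inv_rpow hC.le, ← Real.exp_mul, ← Real.exp_mul,
    Real.rpow_sub hC, Real.rpow_one, div_eq_mul_inv]
  have h : Real.exp (-a) * (Real.exp (a * r) * Real.exp (-(γ * a) * r))
      = Real.exp (-((γ * r - (r - 1)) * a)) := by
    rw [← Real.exp_add, ← Real.exp_add]; ring_nf
  calc C * Real.exp (-a) * ((C ^ r)⁻¹ * Real.exp (a * r) * Real.exp (-(γ * a) * r))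
      = (C * (C ^ r)⁻¹) * (Real.exp (-a) * (Real.exp (a * r) * Real.exp (-(γ * a) * r))) := by
        ring
    _ = C * (C ^ r)⁻¹ * Real.exp (-((γ * r - (r - 1)) * a)) := by rw [h]

lemma meas_pdel_real (C : ℝ) {δ : ℝ} (hδ : 0 ≤ δ) : Measurable fun x : ℝ => pdel C δ x :=
  ((meas_absrpow hδ).neg.exp).const_mul C

lemma tail_bound {δ C ε : ℝ} (hδ0 : 0 < δ) (hC : 0 < C) (hε0 : 0 ≤ ε) (hε1 : ε ≤ 1) (x : ℝ) :
    (if 0 ≤ x then mudel C δ (Ioi x) else mudel C δ (Iic x))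
      ≤ (ENNReal.ofReal C * ∫⁻ y : ℝ, ENNReal.ofReal (Real.exp (-(ε * |y| ^ δ)))) *
        ENNReal.ofReal (Real.exp (-((1 - ε) * |x| ^ δ))) := by
  set A := ∫⁻ y : ℝ, ENNReal.ofReal (Real.exp (-(ε * |y| ^ δ))) with hAdef
  have hpt : ∀ s : Set ℝ, MeasurableSet s → (∀ y ∈ s, |x| ≤ |y|) →
      mudel C δ s ≤ (ENNReal.ofReal C * A) * ENNReal.ofReal (Real.exp (-((1 - ε) * |x| ^ δ))) := by
    intro s hs hxy
    rw [mudel, withDensity_apply _ hs]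
    have hb : ∀ y ∈ s, ENNReal.ofReal (pdel C δ y) ≤
        ENNReal.ofReal (C * Real.exp (-((1 - ε) * |x| ^ δ))) *
          ENNReal.ofReal (Real.exp (-(ε * |y| ^ δ))) := by
      intro y hy
      rw [← ENNReal.ofReal_mul (by positivity), pdel]
      apply ENNReal.ofReal_le_ofReal
      have h1 := exp_conv hδ0 hε0 hε1 (abs_nonneg x) (hxy y hy)
      calc C * Real.exp (-(|y| ^ δ))
          ≤ C * (Real.exp (-((1 - ε) * |x| ^ δ)) * Real.exp (-(ε * |y| ^ δ))) :=
            mul_le_mul_of_nonneg_left h1 hC.le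
        _ = C * Real.exp (-((1 - ε) * |x| ^ δ)) * Real.exp (-(ε * |y| ^ δ)) := by ring
    calc ∫⁻ y in s, ENNReal.ofReal (pdel C δ y)
        ≤ ∫⁻ y in s, ENNReal.ofReal (C * Real.exp (-((1 - ε) * |x| ^ δ))) *
            ENNReal.ofReal (Real.exp (-(ε * |y| ^ δ))) := setLIntegral_mono' hs hb
      _ = ENNReal.ofReal (C * Real.exp (-((1 - ε) * |x| ^ δ))) *
            ∫⁻ y in s, ENNReal.ofReal (Real.exp (-(ε * |y| ^ δ))) :=
          lintegral_const_mul _ (meas_expabs hδ0.le ε)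
      _ ≤ ENNReal.ofReal (C * Real.exp (-((1 - ε) * |x| ^ δ))) * A :=
          mul_le_mul_right (setLIntegral_le_lintegral _ _) _
      _ = (ENNReal.ofReal C * A) * ENNReal.ofReal (Real.exp (-((1 - ε) * |x| ^ δ))) := by
          rw [ENNReal.ofReal_mul hC.le]; ring
  by_cases hx : 0 ≤ x
  · rw [if_pos hx]
    exact hpt _ measurableSet_Ioi fun y hy => by
      rw [abs_of_nonneg hx]; exact le_trans (le_of_lt hy) (le_abs_self y)
  · rw [if_neg hx]
    push_neg at hx
    exact hpt _ measurableSet_Iic fun y hy => by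
      rw [abs_of_nonpos hx.le]; exact le_trans (neg_le_neg hy) (neg_le_abs y)

/-- For `δ ∈ (0,1)`, `p ∈ [2,∞)` and `r ∈ [1,∞)` with `r/(r-1) > p/(p-1)`, there is a
constant `C(p,δ,r)` such that `‖f_δ‖_{L^r(μ_δ)} ≤ C(p,δ,r) ‖g‖_{L^p(μ_δ)}` for every
`g ∈ L^p(μ_δ)` with `∫ g dμ_δ = 0`. -/
theorem fdel_Lr_bound (δ : ℝ) (hδ : δ ∈ Ioo (0 : ℝ) 1) (C : ℝ) (hC : 0 < C)
    (hprob : IsProbabilityMeasure (mudel C δ))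
    (p : ℝ) (hp : 2 ≤ p) (r : ℝ) (hr1 : 1 ≤ r)
    (hr2 : r = 1 ∨ r / (r - 1) > p / (p - 1)) :
    ∃ K : ℝ, 0 < K ∧ ∀ g : ℝ → ℝ,
      MemLp g (ENNReal.ofReal p) (mudel C δ) → (∫ x, g x ∂(mudel C δ)) = 0 →
      eLpNorm (fdel C δ g) (ENNReal.ofReal r) (mudel C δ) ≤
        ENNReal.ofReal K * eLpNorm g (ENNReal.ofReal p) (mudel C δ) := by
  obtain ⟨hδ0, hδ1⟩ := hδ
  have hp1 : (1 : ℝ) < p := by linarith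
  have hp0 : (0 : ℝ) < p := by linarith
  have hr0 : (0 : ℝ) < r := by linarith
  have hrp : r < p := by
    rcases hr2 with h | h
    · linarith
    · rcases eq_or_lt_of_le hr1 with h1 | h1
      · rw [← h1] at h ⊢; simp at h
        rw [div_lt_iff₀ (by linarith : (0:ℝ) < p - 1)] at h
        linarith
      · have hd1 : (0 : ℝ) < r - 1 := by linarith
        have hd2 : (0 : ℝ) < p - 1 := by linarith
        rw [gt_iff_lt, div_lt_div_iff₀ hd2 hd1] at h
        nlinarith
  have hpne : ∀ x : ℝ, 0 < pdel C δ x := pdel_pos δ hC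
  set q : ℝ := p / (p - 1) with hqdef
  have hpq : p.HolderConjugate q := (Real.holderConjugate_iff_eq_conjExponent hp1).mpr hqdef
  have hq0 : 0 < q := hpq.symm.pos
  set ε : ℝ := (p - r) / (2 * r * (p - 1)) with hεdef
  have hε0 : 0 < ε := by apply div_pos <;> nlinarith
  have hε1 : ε ≤ 1 := by
    rw [hεdef, div_le_one (by nlinarith)]; nlinarith
  set γ : ℝ := (1 - ε) / q with hγdef
  have hγ0 : 0 ≤ γ := div_nonneg (by linarith) hq0.le
  set β : ℝ := γ * r - (r - 1) with hβdef
  have hβeq : β = (p - r) / (2 * p) := by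
    have hne1 : p - 1 ≠ 0 := ne_of_gt (by linarith)
    have hne2 : r ≠ 0 := hr0.ne'
    have hne3 : p ≠ 0 := hp0.ne'
    rw [hβdef, hγdef, hqdef, hεdef]
    field_simp
    ring
  have hβ0 : 0 < β := by rw [hβeq]; apply div_pos <;> linarith
  set A : ℝ≥0∞ := ∫⁻ y : ℝ, ENNReal.ofReal (Real.exp (-(ε * |y| ^ δ))) with hAdef
  have hA : A < ∞ := lint_exp_scaled hδ0 hC hprob hε0
  set D : ℝ≥0∞ := ENNReal.ofReal C * A with hDdef
  have hD : D ≠ ∞ := ENNReal.mul_ne_top ENNReal.ofReal_ne_top hA.ne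
  set Dq : ℝ≥0∞ := D ^ (1 / q) with hDqdef
  have hDq : Dq ≠ ∞ := ENNReal.rpow_ne_top_of_nonneg (by positivity) hD
  set M0 : ℝ≥0∞ := ∫⁻ x : ℝ, ENNReal.ofReal (C ^ (1 - r) * Real.exp (-(β * |x| ^ δ))) with hM0def
  have hM0 : M0 < ∞ := by
    rw [hM0def]
    have heq : ∀ x : ℝ, ENNReal.ofReal (C ^ (1 - r) * Real.exp (-(β * |x| ^ δ)))
        = ENNReal.ofReal (C ^ (1 - r)) * ENNReal.ofReal (Real.exp (-(β * |x| ^ δ))) :=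
      fun x => ENNReal.ofReal_mul (by positivity)
    rw [lintegral_congr heq, lintegral_const_mul _ (meas_expabs hδ0.le β)]
    exact ENNReal.mul_lt_top ENNReal.ofReal_lt_top (lint_exp_scaled hδ0 hC hprob hβ0)
  set K : ℝ := (Dq * M0 ^ (1 / r)).toReal + 1 with hKdef
  have hKfin : Dq * M0 ^ (1 / r) ≠ ∞ :=
    ENNReal.mul_ne_top hDq (ENNReal.rpow_ne_top_of_nonneg (by positivity) hM0.ne)
  have hKpos : 0 < K := by rw [hKdef]; positivity
  have hKle : Dq * M0 ^ (1 / r) ≤ ENNReal.ofReal K := by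
    rw [hKdef]
    conv_lhs => rw [← ENNReal.ofReal_toReal hKfin]
    exact ENNReal.ofReal_le_ofReal (by linarith)
  refine ⟨K, hKpos, ?_⟩
  intro g hg hint
  set μ := mudel C δ with hμdef
  set Np : ℝ≥0∞ := (∫⁻ y, (‖g y‖₊ : ℝ≥0∞) ^ p ∂μ) ^ (1 / p) with hNpdef
  have hpzero : ENNReal.ofReal p ≠ 0 := by
    simp only [ne_eq, ENNReal.ofReal_eq_zero, not_le]; exact hp0
  have hrzero : ENNReal.ofReal r ≠ 0 := by
    simp only [ne_eq, ENNReal.ofReal_eq_zero, not_le]; exact hr0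
  have hNp_eq : eLpNorm g (ENNReal.ofReal p) μ = Np := by
    rw [eLpNorm_eq_lintegral_rpow_enorm_toReal hpzero ENNReal.ofReal_ne_top,
      ENNReal.toReal_ofReal hp0.le]
    simp only [enorm_eq_nnnorm, hNpdef]
  have hNp_top : Np ≠ ∞ := by rw [← hNp_eq]; exact hg.2.ne
  have hgint : Integrable g μ := hg.integrable (ENNReal.one_le_ofReal.mpr (by linarith))
  have hgρ : Integrable (fun y => g y * pdel C δ y) volume := by
    have h2 := (integrable_withDensity_iff (meas_pdel C hδ0.le)
      (Filter.Eventually.of_forall fun x => ENNReal.ofReal_lt_top)).mp hgint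
    refine h2.congr (Filter.Eventually.of_forall fun x => ?_)
    simp [ENNReal.toReal_ofReal (hpne x).le]
  have hzero : (∫ y, g y * pdel C δ y) = 0 := by
    have hm : Measurable fun x => (pdel C δ x).toNNReal :=
      (meas_pdel_real C hδ0.le).real_toNNReal
    have h1 : (∫ x, g x ∂μ) = ∫ x, (pdel C δ x).toNNReal • g x := by
      rw [hμdef, mudel]
      exact integral_withDensity_eq_integral_smul hm g
    rw [h1] at hint
    rw [← hint]
    refine integral_congr_ae (Filter.Eventually.of_forall fun x => ?_)
    show g x * pdel C δ x = (pdel C δ x).toNNReal • g x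
    rw [NNReal.smul_def, smul_eq_mul, Real.coe_toNNReal _ (hpne x).le, mul_comm]
  -- splitting of the integral
  have hsplit : ∀ x : ℝ, (∫ y in Ioi x, g y * pdel C δ y)
      = -(∫ y in Iic x, g y * pdel C δ y) := by
    intro x
    have h := integral_add_compl (measurableSet_Iic (a := x)) hgρ
    rw [compl_Iic, hzero] at h
    linarith
  -- Claim A
  have key1 : ∀ s : Set ℝ, MeasurableSet s →
      ENNReal.ofReal |∫ y in s, g y * pdel C δ y| ≤ ∫⁻ y in s, (‖g y‖₊ : ℝ≥0∞) ∂μ := by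
    intro s hs
    rw [← Real.enorm_eq_ofReal_abs]
    refine le_trans (enorm_integral_le_lintegral_enorm _) ?_
    rw [hμdef, mudel, restrict_withDensity hs,
      lintegral_withDensity_eq_lintegral_mul_non_measurable _ (meas_pdel C hδ0.le)
        (Filter.Eventually.of_forall fun x => ENNReal.ofReal_lt_top)]
    refine le_of_eq (lintegral_congr fun y => ?_)
    simp only [Pi.mul_apply]
    rw [enorm_mul, Real.enorm_eq_ofReal (hpne y).le, mul_comm, enorm_eq_nnnorm]
  -- Claim B : Hölder
  have hgm : AEMeasurable (fun y => (‖g y‖₊ : ℝ≥0∞)) μ := hg.aestronglyMeasurable.enorm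
  have key2 : ∀ s : Set ℝ, MeasurableSet s →
      (∫⁻ y in s, (‖g y‖₊ : ℝ≥0∞) ∂μ) ≤ Np * (μ s) ^ (1 / q) := by
    intro s hs
    rw [← lintegral_indicator hs]
    have him : AEMeasurable (s.indicator (1 : ℝ → ℝ≥0∞)) μ :=
      (measurable_one.indicator hs).aemeasurable
    have hle := ENNReal.lintegral_mul_le_Lp_mul_Lq μ hpq hgm him
    refine le_trans (le_of_eq ?_) (le_trans hle ?_)
    · refine lintegral_congr fun y => ?_
      simp only [Pi.mul_apply]
      by_cases hy : y ∈ s <;> simp [hy]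
    · have h2 : (∫⁻ y, (s.indicator (1 : ℝ → ℝ≥0∞) y) ^ q ∂μ) = μ s := by
        rw [← lintegral_indicator_one hs]
        refine lintegral_congr fun y => ?_
        by_cases hy : y ∈ s <;>
          simp [hy, ENNReal.one_rpow, ENNReal.zero_rpow_of_pos hq0]
      rw [h2, hNpdef]
  -- pointwise bound on fdel by the chosen tail
  have hb : ∀ x : ℝ, (‖fdel C δ g x‖₊ : ℝ≥0∞) ≤
      ENNReal.ofReal ((pdel C δ x)⁻¹) *
        ∫⁻ y in (if 0 ≤ x then Ioi x else Iic x), (‖g y‖₊ : ℝ≥0∞) ∂μ := by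
    intro x
    by_cases hx : 0 ≤ x
    · rw [if_pos hx]
      rw [show fdel C δ g x = (pdel C δ x)⁻¹ * ∫ y in Ioi x, g y * pdel C δ y from rfl,
        ← enorm_eq_nnnorm, enorm_mul, Real.enorm_eq_ofReal (inv_nonneg.mpr (hpne x).le),
        Real.enorm_eq_ofReal_abs]
      exact mul_le_mul_right (key1 _ measurableSet_Ioi) _
    · rw [if_neg hx]
      rw [show fdel C δ g x = (pdel C δ x)⁻¹ * ∫ y in Ioi x, g y * pdel C δ y from rfl,
        hsplit x, ← enorm_eq_nnnorm, enorm_mul, enorm_neg,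
        Real.enorm_eq_ofReal (inv_nonneg.mpr (hpne x).le), Real.enorm_eq_ofReal_abs]
      exact mul_le_mul_right (key1 _ measurableSet_Iic) _
  -- combine with the tail bound
  set W : ℝ → ℝ≥0∞ := fun x =>
    ENNReal.ofReal ((pdel C δ x)⁻¹) * (Dq * ENNReal.ofReal (Real.exp (-(γ * |x| ^ δ))))
    with hWdef
  have hfW : ∀ x : ℝ, (‖fdel C δ g x‖₊ : ℝ≥0∞) ≤ Np * W x := by
    intro x
    have htail := tail_bound hδ0 hC hε0.le hε1 x
    have hmeass : MeasurableSet (if 0 ≤ x then Ioi x else Iic x) := by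
      by_cases hx : 0 ≤ x <;> simp [hx, measurableSet_Ioi, measurableSet_Iic]
    have h1 : (μ (if 0 ≤ x then Ioi x else Iic x)) ^ (1 / q)
        ≤ (D * ENNReal.ofReal (Real.exp (-((1 - ε) * |x| ^ δ)))) ^ (1 / q) := by
      apply ENNReal.rpow_le_rpow _ (by positivity)
      rw [hμdef]
      by_cases hx : 0 ≤ x
      · simpa [hx] using htail
      · simpa [hx] using htail
    have h2 : (D * ENNReal.ofReal (Real.exp (-((1 - ε) * |x| ^ δ)))) ^ (1 / q)
        = Dq * ENNReal.ofReal (Real.exp (-(γ * |x| ^ δ))) := by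
      rw [ENNReal.mul_rpow_of_nonneg _ _ (by positivity : (0:ℝ) ≤ 1 / q),
        ENNReal.ofReal_rpow_of_pos (Real.exp_pos _), ← Real.exp_mul, hDqdef]
      congr 2
      rw [hγdef]; ring
    calc (‖fdel C δ g x‖₊ : ℝ≥0∞)
        ≤ ENNReal.ofReal ((pdel C δ x)⁻¹) *
            ∫⁻ y in (if 0 ≤ x then Ioi x else Iic x), (‖g y‖₊ : ℝ≥0∞) ∂μ := hb x
      _ ≤ ENNReal.ofReal ((pdel C δ x)⁻¹) *
            (Np * (μ (if 0 ≤ x then Ioi x else Iic x)) ^ (1 / q)) :=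
          mul_le_mul_right (key2 _ hmeass) _
      _ ≤ ENNReal.ofReal ((pdel C δ x)⁻¹) *
            (Np * (Dq * ENNReal.ofReal (Real.exp (-(γ * |x| ^ δ))))) := by
          refine mul_le_mul_right (mul_le_mul_right ?_ _) _
          rw [← h2]; exact h1
      _ = Np * W x := by rw [hWdef]; ring
  -- the weighted integral of W ^ r
  have hWr : ∀ x : ℝ, ENNReal.ofReal (pdel C δ x) * W x ^ r
      = Dq ^ r * ENNReal.ofReal (C ^ (1 - r) * Real.exp (-(β * |x| ^ δ))) := by
    intro x
    have hu : (0:ℝ) ≤ ((pdel C δ x)⁻¹) ^ r :=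
      (Real.rpow_pos_of_pos (inv_pos.mpr (hpne x)) r).le
    have hR : C ^ (1 - r) * Real.exp (-(β * |x| ^ δ))
        = pdel C δ x * (((pdel C δ x)⁻¹) ^ r * Real.exp (-(γ * |x| ^ δ)) ^ r) := by
      simp only [pdel, hβdef]
      exact (real_density_calc hC (|x| ^ δ) r γ).symm
    simp only [hWdef]
    rw [ENNReal.mul_rpow_of_nonneg _ _ hr0.le, ENNReal.mul_rpow_of_nonneg _ _ hr0.le,
      ENNReal.ofReal_rpow_of_pos (inv_pos.mpr (hpne x)),
      ENNReal.ofReal_rpow_of_pos (Real.exp_pos _), hR,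
      ENNReal.ofReal_mul (hpne x).le, ENNReal.ofReal_mul hu]
    ring
  have hWint : (∫⁻ x, W x ^ r ∂μ) = Dq ^ r * M0 := by
    rw [hμdef, mudel, lintegral_withDensity_eq_lintegral_mul_non_measurable _
      (meas_pdel C hδ0.le) (Filter.Eventually.of_forall fun x => ENNReal.ofReal_lt_top)]
    have : ∀ x : ℝ, ((fun x => ENNReal.ofReal (pdel C δ x)) * fun x => W x ^ r) x
        = Dq ^ r * ENNReal.ofReal (C ^ (1 - r) * Real.exp (-(β * |x| ^ δ))) := by
      intro x; simp only [Pi.mul_apply]; exact hWr x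
    rw [lintegral_congr this, lintegral_const_mul' _ _
      (ENNReal.rpow_ne_top_of_nonneg hr0.le hDq), hM0def]
  -- final computation
  rw [eLpNorm_eq_lintegral_rpow_enorm_toReal hrzero ENNReal.ofReal_ne_top,
    ENNReal.toReal_ofReal hr0.le, hNp_eq]
  have hNpr : Np ^ r ≠ ∞ := ENNReal.rpow_ne_top_of_nonneg hr0.le hNp_top
  calc (∫⁻ x, (‖fdel C δ g x‖₊ : ℝ≥0∞) ^ r ∂μ) ^ (1 / r)
      ≤ (∫⁻ x, (Np * W x) ^ r ∂μ) ^ (1 / r) := by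
        apply ENNReal.rpow_le_rpow _ (by positivity)
        exact lintegral_mono fun x => ENNReal.rpow_le_rpow (hfW x) hr0.le
    _ = (Np ^ r * ∫⁻ x, W x ^ r ∂μ) ^ (1 / r) := by
        rw [← lintegral_const_mul' _ _ hNpr]
        congr 1
        exact lintegral_congr fun x => ENNReal.mul_rpow_of_nonneg _ _ hr0.le
    _ = (Np ^ r * (Dq ^ r * M0)) ^ (1 / r) := by rw [hWint]
    _ = Np * (Dq * M0 ^ (1 / r)) := by
        rw [ENNReal.mul_rpow_of_nonneg _ _ (by positivity : (0:ℝ) ≤ 1 / r),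
          ENNReal.mul_rpow_of_nonneg _ _ (by positivity : (0:ℝ) ≤ 1 / r),
          ← ENNReal.rpow_mul Np, ← ENNReal.rpow_mul Dq,
          mul_one_div_cancel hr0.ne', ENNReal.rpow_one, ENNReal.rpow_one]
    _ ≤ Np * ENNReal.ofReal K := mul_le_mul_right hKle _
    _ = ENNReal.ofReal K * Np := mul_comm _ _
end

section
/- Let μ(dx) = e^{-x} 1_{(0,∞)}(x) dx be the standard exponential probability measure and ν(du) = (e^{-u}/u) 1_{(0,∞)}(u) du its associated Lévy measure. Then for every Schwartz function f : ℝ → ℝ, ∫_0^∞ ∫_0^∞ |f(x+u) - f(x)|² ν(du) μ(dx) ≤ ∫_0^∞ w |f'(w)|² μ(dw). -/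
open MeasureTheory Real Set

/-- The standard exponential probability measure on `(0,∞)`. -/
noncomputable def expMeasure : Measure ℝ :=
  (volume.restrict (Ioi (0 : ℝ))).withDensity fun x => ENNReal.ofReal (Real.exp (-x))

/-- The Lévy measure of the standard exponential distribution, with density `e^{-u}/u`
on `(0,∞)`. -/
noncomputable def expLevyMeasure : Measure ℝ :=
  (volume.restrict (Ioi (0 : ℝ))).withDensity fun u => ENNReal.ofReal (Real.exp (-u) / u)

open scoped ENNReal

/-- Exponential integral as a lintegral over `Ici a`. -/
lemma lint_exp_Ici (a : ℝ) :
    ∫⁻ u in Ici a, ENNReal.ofReal (rexp (-u)) = ENNReal.ofReal (rexp (-a)) := by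
  rw [← restrict_Ioi_eq_restrict_Ici, ← integral_exp_neg_Ioi a,
    ← ofReal_integral_eq_lintegral_ofReal]
  · have : IntegrableOn (fun x : ℝ => rexp (-1 * x)) (Ioi a) :=
      exp_neg_integrableOn_Ioi a one_pos
    simpa [IntegrableOn] using this
  · exact Filter.Eventually.of_forall fun x => (Real.exp_pos _).le

/-- Cauchy–Schwarz for `ℝ≥0∞`-valued lintegrals. -/
lemma lintegral_sq_le' {α : Type*} [MeasurableSpace α] (μ : Measure α) (g : α → ℝ≥0∞)
    (hg : AEMeasurable g μ) :
    (∫⁻ a, g a ∂μ) ^ 2 ≤ μ Set.univ * ∫⁻ a, g a ^ 2 ∂μ := by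
  have hpq : Real.HolderConjugate 2 2 := Real.HolderConjugate.two_two
  have h := ENNReal.lintegral_mul_le_Lp_mul_Lq μ hpq (aemeasurable_const (b := (1 : ℝ≥0∞))) hg
  simp only [Pi.mul_apply, one_mul, ENNReal.one_rpow, lintegral_const] at h
  have h2 : (∫⁻ a, g a ∂μ) ^ 2 ≤
      ((μ Set.univ) ^ (1 / 2 : ℝ) * (∫⁻ a, g a ^ (2 : ℝ) ∂μ) ^ (1 / 2 : ℝ)) ^ 2 := by
    exact pow_le_pow_left' (by simpa using h) 2
  refine h2.trans_eq ?_
  rw [← ENNReal.rpow_natCast _ 2, ENNReal.mul_rpow_of_nonneg _ _ (by norm_num),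
    ← ENNReal.rpow_mul, ← ENNReal.rpow_mul]
  norm_num [ENNReal.rpow_two]

/-- FTC + Cauchy–Schwarz: `(f(x+u)-f(x))² ≤ u ∫_x^{x+u} f'(t)² dt`. -/
lemma key_CS (f : SchwartzMap ℝ ℝ) {x u : ℝ} (hu : 0 < u) :
    ENNReal.ofReal ((f (x + u) - f x) ^ 2) ≤
      ENNReal.ofReal u * ∫⁻ t in Ioc x (x + u), ENNReal.ofReal (deriv (⇑f) t ^ 2) := by
  have hD : Continuous (deriv (⇑f)) := by
    have h1 : deriv (⇑f) = ⇑(SchwartzMap.derivCLM ℝ ℝ f) :=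
      funext fun y => (SchwartzMap.derivCLM_apply (𝕜 := ℝ) f y).symm
    rw [h1]; exact (SchwartzMap.derivCLM ℝ ℝ f).continuous
  have hle : x ≤ x + u := by linarith
  have hftc : f (x + u) - f x = ∫ t in Ioc x (x + u), deriv (⇑f) t := by
    rw [← intervalIntegral.integral_of_le hle]
    exact (intervalIntegral.integral_deriv_eq_sub (fun t _ => f.differentiableAt)
      (hD.intervalIntegrable _ _)).symm
  set A := ∫ t in Ioc x (x + u), |deriv (⇑f) t| with hAdef
  have hA0 : 0 ≤ A := integral_nonneg fun t => abs_nonneg _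
  have hA : |f (x + u) - f x| ≤ A := by
    have h2 := intervalIntegral.abs_integral_le_integral_abs (f := deriv (⇑f)) (μ := volume) hle
    rw [intervalIntegral.integral_of_le hle (f := fun t => |deriv (⇑f) t|)] at h2
    rw [hftc, ← intervalIntegral.integral_of_le hle]
    exact h2
  have hint : IntegrableOn (fun t => |deriv (⇑f) t|) (Ioc x (x + u)) :=
    hD.abs.integrableOn_Ioc
  have hA2 : ENNReal.ofReal A = ∫⁻ t in Ioc x (x + u), ENNReal.ofReal |deriv (⇑f) t| :=
    ofReal_integral_eq_lintegral_ofReal hint (Filter.Eventually.of_forall fun t => abs_nonneg _)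
  have h1 : ENNReal.ofReal ((f (x + u) - f x) ^ 2) ≤ ENNReal.ofReal (A ^ 2) := by
    apply ENNReal.ofReal_le_ofReal
    calc (f (x + u) - f x) ^ 2 = |f (x + u) - f x| ^ 2 := (sq_abs _).symm
    _ ≤ A ^ 2 := by gcongr
  refine h1.trans ?_
  rw [ENNReal.ofReal_pow hA0, hA2]
  have hCS := lintegral_sq_le' (volume.restrict (Ioc x (x + u)))
    (fun t => ENNReal.ofReal |deriv (⇑f) t|)
    ((hD.abs.measurable.ennreal_ofReal).aemeasurable)
  rw [Measure.restrict_apply_univ, Real.volume_Ioc, add_sub_cancel_left] at hCS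
  refine hCS.trans_eq ?_
  congr 1
  refine lintegral_congr fun t => ?_
  rw [← ENNReal.ofReal_pow (abs_nonneg _), sq_abs]

/-- The non-local exponential energy form is dominated by the weighted local one:
`∫∫ |f(x+u)-f(x)|² ν(du) μ(dx) ≤ ∫ w |f'(w)|² μ(dw)`. -/
theorem exp_nonlocal_le_weighted_local (f : SchwartzMap ℝ ℝ) :
    (∫ x, (∫ u, (f (x + u) - f x) ^ 2 ∂expLevyMeasure) ∂expMeasure) ≤
      ∫ w, w * (deriv (fun y => f y) w) ^ 2 ∂expMeasure := by
  classical
  have hD : Continuous (deriv (⇑f)) := by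
    have h1 : deriv (⇑f) = ⇑(SchwartzMap.derivCLM ℝ ℝ f) :=
      funext fun y => (SchwartzMap.derivCLM_apply (𝕜 := ℝ) f y).symm
    rw [h1]; exact (SchwartzMap.derivCLM ℝ ℝ f).continuous
  set D := deriv (⇑f) with hDdef
  set h : ℝ → ℝ≥0∞ := fun t => ENNReal.ofReal (D t ^ 2) with hhdef
  have hh : Measurable h := ((hD.pow 2).measurable).ennreal_ofReal
  set Φ : ℝ → ℝ≥0∞ := fun t => ENNReal.ofReal (rexp (-t)) * h t with hPhidef
  have hPhi : Measurable Φ := ((measurable_neg.exp).ennreal_ofReal).mul hh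
  set I : ℝ≥0∞ := ∫⁻ t in Ioi 0, ENNReal.ofReal t * Φ t with hIdef
  have hdens : Measurable fun x : ℝ => ENNReal.ofReal (rexp (-x)) :=
    (measurable_neg.exp).ennreal_ofReal
  -- Step 1: the right-hand side equals I.toReal
  have hRHS : (∫ w, w * (deriv (fun y => f y) w) ^ 2 ∂expMeasure) = I.toReal := by
    have hac : expMeasure ≪ volume.restrict (Ioi (0 : ℝ)) :=
      withDensity_absolutelyContinuous _ _
    have h0 : (∫ w, w * D w ^ 2 ∂expMeasure)
        = (∫⁻ w, ENNReal.ofReal (w * D w ^ 2) ∂expMeasure).toReal := by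
      apply integral_eq_lintegral_of_nonneg_ae
      · filter_upwards [(ae_restrict_mem measurableSet_Ioi).filter_mono hac.ae_le] with w hw
        exact mul_nonneg (le_of_lt hw) (sq_nonneg _)
      · exact (continuous_id.mul (hD.pow 2)).aestronglyMeasurable
    rw [show (deriv (fun y => f y)) = D from rfl, h0]
    congr 1
    rw [expMeasure, lintegral_withDensity_eq_lintegral_mul _ hdens
      (show Measurable fun w : ℝ => ENNReal.ofReal (w * D w ^ 2) from
        (measurable_id'.mul ((hD.pow 2).measurable)).ennreal_ofReal)]
    refine setLIntegral_congr_fun measurableSet_Ioi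
      (fun w hw => ?_)
    simp only [Pi.mul_apply]
    rw [ENNReal.ofReal_mul (le_of_lt hw)]
    ring
  -- Step 2: I is finite
  have hIfin : I ≠ ⊤ := by
    obtain ⟨C, hCpos, hC⟩ := (SchwartzMap.derivCLM ℝ ℝ f).decay 0 0
    simp only [pow_zero, one_mul, norm_iteratedFDeriv_zero] at hC
    have hDC : ∀ t, D t ^ 2 ≤ C ^ 2 := by
      intro t
      have h2 := hC t
      rw [SchwartzMap.derivCLM_apply] at h2
      calc D t ^ 2 = ‖D t‖ ^ 2 := by rw [Real.norm_eq_abs, sq_abs]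
      _ ≤ C ^ 2 := pow_le_pow_left₀ (norm_nonneg _) h2 2
    have hint : IntegrableOn (fun t => C ^ 2 * (t * rexp (-t))) (Ioi (0 : ℝ)) := by
      have h2 := Real.GammaIntegral_convergent (s := 2) (by norm_num)
      have h3 : IntegrableOn (fun t : ℝ => t * rexp (-t)) (Ioi 0) := by
        refine h2.congr_fun ?_ measurableSet_Ioi
        intro t ht
        simp only [show (2 : ℝ) - 1 = 1 by norm_num, Real.rpow_one, mul_comm]
      exact h3.const_mul _
    have hbound : I ≤ ∫⁻ t in Ioi 0, ENNReal.ofReal (C ^ 2 * (t * rexp (-t))) := by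
      refine lintegral_mono_ae ?_
      filter_upwards [ae_restrict_mem measurableSet_Ioi] with t ht
      simp only [hPhidef, hhdef]
      rw [← ENNReal.ofReal_mul (Real.exp_pos _).le, ← ENNReal.ofReal_mul ht.le]
      apply ENNReal.ofReal_le_ofReal
      have h4 := mul_le_mul_of_nonneg_left (hDC t)
        (mul_nonneg ht.le (Real.exp_pos (-t)).le)
      nlinarith [h4]
    exact (hbound.trans_lt hint.lintegral_lt_top).ne
  -- the inner kernel
  set G : ℝ → ℝ → ℝ≥0∞ := fun x u => ENNReal.ofReal ((f (x + u) - f x) ^ 2) with hGdef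
  have hGxcont : ∀ x, Continuous fun u => (f (x + u) - f x) ^ 2 := fun x =>
    ((f.continuous.comp (continuous_const.add continuous_id)).sub continuous_const).pow 2
  set K : ℝ → ℝ≥0∞ := fun x => ∫⁻ u, G x u ∂expLevyMeasure with hKdef
  have hdensν : Measurable fun u : ℝ => ENNReal.ofReal (rexp (-u) / u) :=
    ((measurable_neg.exp).div measurable_id).ennreal_ofReal
  have hKeq : ∀ x, K x = ∫⁻ u in Ioi 0, ENNReal.ofReal (rexp (-u) / u) * G x u := by
    intro x
    show (∫⁻ u, G x u ∂((volume.restrict (Ioi (0:ℝ))).withDensity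
      fun u => ENNReal.ofReal (rexp (-u) / u))) = _
    rw [lintegral_withDensity_eq_lintegral_mul _ hdensν ((hGxcont x).measurable.ennreal_ofReal)]
    rfl
  -- first Tonelli swap: u-integral of the set integral
  have hM : ∀ x : ℝ,
      (∫⁻ u in Ioi 0, ENNReal.ofReal (rexp (-u)) * ∫⁻ t in Ioc x (x + u), h t)
        = ∫⁻ t in Ioi x, ENNReal.ofReal (rexp (-(t - x))) * h t := by
    intro x
    have step1 : ∀ u : ℝ, ENNReal.ofReal (rexp (-u)) * ∫⁻ t in Ioc x (x + u), h t
        = ∫⁻ t, (Ioc x (x + u)).indicator (fun t => ENNReal.ofReal (rexp (-u)) * h t) t := by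
      intro u
      rw [lintegral_indicator measurableSet_Ioc _, ← lintegral_const_mul _ hh]
    simp_rw [step1]
    have hmeas : Measurable (Function.uncurry fun u t =>
        (Ioc x (x + u)).indicator (fun t => ENNReal.ofReal (rexp (-u)) * h t) t) := by
      have hs : MeasurableSet {p : ℝ × ℝ | x < p.2 ∧ p.2 ≤ x + p.1} :=
        (measurableSet_lt measurable_const measurable_snd).inter
          (measurableSet_le measurable_snd (measurable_const.add measurable_fst))
      have heq : (Function.uncurry fun u t =>
          (Ioc x (x + u)).indicator (fun t => ENNReal.ofReal (rexp (-u)) * h t) t)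
          = {p : ℝ × ℝ | x < p.2 ∧ p.2 ≤ x + p.1}.indicator
            (fun p => ENNReal.ofReal (rexp (-p.1)) * h p.2) := by
        ext ⟨u, t⟩
        simp only [Function.uncurry, Set.indicator_apply, Set.mem_Ioc, Set.mem_setOf_eq]
      rw [heq]
      exact Measurable.indicator
        ((measurable_fst.neg.exp.ennreal_ofReal).mul (hh.comp measurable_snd)) hs
    rw [lintegral_lintegral_swap hmeas.aemeasurable]
    have inner : ∀ t : ℝ,
        (∫⁻ u in Ioi 0, (Ioc x (x + u)).indicator
            (fun t' => ENNReal.ofReal (rexp (-u)) * h t') t)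
          = (Ioi x).indicator (fun t => ENNReal.ofReal (rexp (-(t - x))) * h t) t := by
      intro t
      by_cases ht : x < t
      · have heq : ∀ u : ℝ, (Ioc x (x + u)).indicator
            (fun t' => ENNReal.ofReal (rexp (-u)) * h t') t
            = (Ici (t - x)).indicator (fun u => ENNReal.ofReal (rexp (-u))) u * h t := by
          intro u
          simp only [Set.indicator_apply, Set.mem_Ioc, Set.mem_Ici]
          by_cases hc : t - x ≤ u
          · rw [if_pos ⟨ht, by linarith⟩, if_pos hc]
          · rw [if_neg, if_neg hc, zero_mul]
            intro hcc
            exact hc (by linarith [hcc.2])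
        simp_rw [heq]
        rw [lintegral_mul_const _ ((measurable_neg.exp.ennreal_ofReal).indicator measurableSet_Ici),
          lintegral_indicator measurableSet_Ici _, Measure.restrict_restrict measurableSet_Ici]
        have hsub : Ici (t - x) ∩ Ioi 0 = Ici (t - x) :=
          inter_eq_self_of_subset_left fun u hu => lt_of_lt_of_le (by linarith : (0:ℝ) < t - x) hu
        rw [hsub, lint_exp_Ici, Set.indicator_of_mem (Set.mem_Ioi.mpr ht)]
      · have heq0 : ∀ u : ℝ, (Ioc x (x + u)).indicator
            (fun t' => ENNReal.ofReal (rexp (-u)) * h t') t = 0 := by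
          intro u
          exact Set.indicator_of_notMem (fun hcc => ht hcc.1) _
        simp_rw [heq0]
        rw [lintegral_zero,
          Set.indicator_of_notMem (fun hmem => ht (Set.mem_Ioi.mp hmem))]
    simp_rw [inner]
    rw [lintegral_indicator measurableSet_Ioi _]
  -- the key pointwise-in-x bound
  have hKM : ∀ x : ℝ, K x ≤ ∫⁻ t in Ioi x, ENNReal.ofReal (rexp (-(t - x))) * h t := by
    intro x
    rw [hKeq x, ← hM x]
    refine lintegral_mono_ae ?_
    filter_upwards [ae_restrict_mem measurableSet_Ioi] with u hu
    calc ENNReal.ofReal (rexp (-u) / u) * G x u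
        ≤ ENNReal.ofReal (rexp (-u) / u) *
            (ENNReal.ofReal u * ∫⁻ t in Ioc x (x + u), h t) :=
          mul_le_mul_right (key_CS f hu) _
    _ = (ENNReal.ofReal (rexp (-u) / u) * ENNReal.ofReal u) *
          ∫⁻ t in Ioc x (x + u), h t := (mul_assoc _ _ _).symm
    _ = ENNReal.ofReal (rexp (-u)) * ∫⁻ t in Ioc x (x + u), h t := by
        rw [← ENNReal.ofReal_mul (div_nonneg (Real.exp_pos _).le (le_of_lt hu)), div_mul_cancel₀ _ (ne_of_gt hu)]
  -- measurability of K
  have hKmeas : Measurable K := by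
    have hrepr : K = fun x => ∫⁻ u,
        (Ioi (0 : ℝ)).indicator (fun u => ENNReal.ofReal (rexp (-u) / u) * G x u) u ∂volume := by
      funext x
      rw [hKeq x, ← lintegral_indicator measurableSet_Ioi _]
    rw [hrepr]
    have hm : Measurable fun p : ℝ × ℝ =>
        (Ioi (0 : ℝ)).indicator (fun u => ENNReal.ofReal (rexp (-u) / u) * G p.1 u) p.2 := by
      have heq : (fun p : ℝ × ℝ =>
          (Ioi (0 : ℝ)).indicator (fun u => ENNReal.ofReal (rexp (-u) / u) * G p.1 u) p.2)
          = {p : ℝ × ℝ | 0 < p.2}.indicator (fun p =>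
              ENNReal.ofReal (rexp (-p.2) / p.2) *
                ENNReal.ofReal ((f (p.1 + p.2) - f p.1) ^ 2)) := by
        ext p
        simp only [Set.indicator_apply, Set.mem_Ioi, Set.mem_setOf_eq, hGdef]
      rw [heq]
      refine Measurable.indicator (Measurable.mul
        (f := fun p : ℝ × ℝ => ENNReal.ofReal (rexp (-p.2) / p.2))
        (g := fun p : ℝ × ℝ => ENNReal.ofReal ((f (p.1 + p.2) - f p.1) ^ 2)) ?_ ?_)
        (measurableSet_lt measurable_const measurable_snd)
      · exact ((measurable_snd.neg.exp).div measurable_snd).ennreal_ofReal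
      · exact (((f.continuous.comp (continuous_fst.add continuous_snd)).sub
          (f.continuous.comp continuous_fst)).pow 2).measurable.ennreal_ofReal
    exact hm.lintegral_prod_right'
  -- second Tonelli swap
  have hswap2 : (∫⁻ x in Ioi 0, ∫⁻ t in Ioi x, Φ t) = I := by
    have step : ∀ x : ℝ, (∫⁻ t in Ioi x, Φ t) = ∫⁻ t, (Ioi x).indicator Φ t :=
      fun x => (lintegral_indicator measurableSet_Ioi _).symm
    simp_rw [step]
    have hm2 : Measurable (Function.uncurry fun x t => (Ioi x).indicator Φ t) := by
      have heq : (Function.uncurry fun x t => (Ioi x).indicator Φ t)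
          = {p : ℝ × ℝ | p.1 < p.2}.indicator (fun p => Φ p.2) := by
        ext ⟨x, t⟩
        simp only [Function.uncurry, Set.indicator_apply, Set.mem_Ioi, Set.mem_setOf_eq]
      rw [heq]
      exact (hPhi.comp measurable_snd).indicator
        (measurableSet_lt measurable_fst measurable_snd)
    rw [lintegral_lintegral_swap hm2.aemeasurable]
    have inner2 : ∀ t : ℝ, (∫⁻ x in Ioi 0, (Ioi x).indicator Φ t)
        = ENNReal.ofReal t * Φ t := by
      intro t
      have heq : ∀ x : ℝ, (Ioi x).indicator Φ t = (Iio t).indicator (fun _ => Φ t) x := by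
        intro x
        simp only [Set.indicator_apply, Set.mem_Ioi, Set.mem_Iio]
      simp_rw [heq]
      rw [lintegral_indicator measurableSet_Iio _, setLIntegral_const,
        Measure.restrict_apply measurableSet_Iio]
      have hIoo : Iio t ∩ Ioi 0 = Ioo 0 t := by
        ext y
        simp only [Set.mem_inter_iff, Set.mem_Iio, Set.mem_Ioi, Set.mem_Ioo]
        tauto
      rw [hIoo, Real.volume_Ioo, sub_zero, mul_comm]
    simp_rw [inner2]
    rw [hIdef, ← lintegral_indicator measurableSet_Ioi _]
    refine lintegral_congr fun t => ?_
    by_cases ht : t ∈ Ioi (0 : ℝ)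
    · rw [Set.indicator_of_mem ht]
    · rw [Set.indicator_of_notMem ht,
        ENNReal.ofReal_of_nonpos (not_lt.1 ht), zero_mul]
  -- main lintegral bound
  have hmain : (∫⁻ x, K x ∂expMeasure) ≤ I := by
    rw [expMeasure, lintegral_withDensity_eq_lintegral_mul _ hdens hKmeas]
    calc ∫⁻ x in Ioi 0, ((fun x => ENNReal.ofReal (rexp (-x))) * K) x
        ≤ ∫⁻ x in Ioi 0, ENNReal.ofReal (rexp (-x)) *
            ∫⁻ t in Ioi x, ENNReal.ofReal (rexp (-(t - x))) * h t :=
          lintegral_mono fun x => mul_le_mul_right (hKM x) _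
    _ = ∫⁻ x in Ioi 0, ∫⁻ t in Ioi x, Φ t := by
        refine lintegral_congr fun x => ?_
        rw [← lintegral_const_mul _
          (show Measurable fun t : ℝ => ENNReal.ofReal (rexp (-(t - x))) * h t from
          (((measurable_id'.sub_const x).neg.exp).ennreal_ofReal).mul hh)]
        refine setLIntegral_congr_fun measurableSet_Ioi (fun t ht => ?_)
        simp only [hPhidef]
        rw [← mul_assoc, ← ENNReal.ofReal_mul (Real.exp_pos _).le, ← Real.exp_add,
          show -x + -(t - x) = -t by ring]
    _ = I := hswap2
  -- assembling everything
  have hLHS : (∫ x, (∫ u, (f (x + u) - f x) ^ 2 ∂expLevyMeasure) ∂expMeasure)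
      = (∫⁻ x, ENNReal.ofReal ((K x).toReal) ∂expMeasure).toReal := by
    have hx : ∀ x, (∫ u, (f (x + u) - f x) ^ 2 ∂expLevyMeasure) = (K x).toReal := by
      intro x
      exact integral_eq_lintegral_of_nonneg_ae
        (Filter.Eventually.of_forall fun u => sq_nonneg _)
        (hGxcont x).aestronglyMeasurable
    simp_rw [hx]
    exact integral_eq_lintegral_of_nonneg_ae
      (Filter.Eventually.of_forall fun x => ENNReal.toReal_nonneg)
      (hKmeas.ennreal_toReal).aestronglyMeasurable
  rw [hLHS, hRHS]
  refine ENNReal.toReal_mono hIfin ?_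
  calc ∫⁻ x, ENNReal.ofReal ((K x).toReal) ∂expMeasure
      ≤ ∫⁻ x, K x ∂expMeasure := lintegral_mono fun x => ENNReal.ofReal_toReal_le
  _ ≤ I := hmain
end
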